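/- Let f be holomorphic in a neighborhood of infinity with f(z) = 1 + O(1/z), let n ∈ ℕ, and let Q_n be a polynomial of degree ≤ n, Q_n ≢ 0, and P_n a polynomial of degree ≤ n such that R_n(z) := Q_n(z)f(z) - P_n(z) = O(z^{-(n+1)}) as z → ∞. If γ is a closed contour in the domain of holomorphy of f such that f is holomorphic outside and on γ (including at ∞) with the above expansion, then for k = 0, 1, …, n-1: ∮_γ t^k Q_n(t) f(t) dt = 0. -/

import Mathlib

open Polynomial Asymptotics Filter

/-- Complex orthogonality of the Padé denominator: if `R_n = Q_n f - P_n = O(z^{-(n+1)})`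
at infinity, then `∮ t^k Q_n(t) f(t) dt = 0` for `k = 0, …, n-1` over a closed contour
(a circle of radius `r`) outside and on which `f` is holomorphic. -/
theorem pade_denominator_orthogonality
    (f : ℂ → ℂ) (n : ℕ) (Q P : Polynomial ℂ)
    (hQdeg : Q.degree ≤ n) (hQ : Q ≠ 0) (hPdeg : P.degree ≤ n)
    (r : ℝ) (hr : 0 < r)
    (hf : DifferentiableOn ℂ f {z : ℂ | r ≤ ‖z‖})
    (hf1 : (fun z : ℂ => f z - 1) =O[Bornology.cobounded ℂ] fun z : ℂ => z⁻¹)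
    (hR : (fun z : ℂ => Q.eval z * f z - P.eval z) =O[Bornology.cobounded ℂ]
        fun z : ℂ => (z ^ (n + 1))⁻¹) :
    ∀ k : ℕ, k < n → (∮ t in C(0, r), t ^ k * Q.eval t * f t) = 0 := by
  intro k hk
  -- the remainder function
  set g : ℂ → ℂ := fun z => z ^ k * (Q.eval z * f z - P.eval z) with hg
  -- continuity of g outside the ball of radius r
  have hgc : ContinuousOn g {z : ℂ | r ≤ ‖z‖} := by
    exact ((continuous_pow k).continuousOn.mul
      ((Q.continuous.continuousOn.mul hf.continuousOn).sub P.continuous.continuousOn))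
  -- differentiability of g at points with r < |z|
  have hgd : ∀ z : ℂ, r < ‖z‖ → DifferentiableAt ℂ g z := by
    intro z hz
    have hopen : IsOpen {w : ℂ | r < ‖w‖} :=
      isOpen_Ioi.preimage continuous_norm
    have hsub : {w : ℂ | r < ‖w‖} ⊆ {z : ℂ | r ≤ ‖z‖} := by
      intro w hw
      simp only [Set.mem_setOf_eq] at hw ⊢
      exact le_of_lt hw
    have hf' : DifferentiableOn ℂ f {w : ℂ | r < ‖w‖} := hf.mono hsub
    have hfz : DifferentiableAt ℂ f z := hf'.differentiableAt (hopen.mem_nhds hz)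
    exact (differentiableAt_pow k).mul
      ((Q.differentiable.differentiableAt.mul hfz).sub P.differentiable.differentiableAt)
  -- the polynomial part integrates to zero
  have hpoly : (∮ t in C(0, r), t ^ k * P.eval t) = 0 := by
    apply Complex.circleIntegral_eq_zero_of_differentiable_on_off_countable hr.le
      Set.countable_empty (((continuous_pow k).mul P.continuous).continuousOn)
    intro z _
    exact (differentiableAt_pow k).mul P.differentiable.differentiableAt
  -- sphere is inside the region
  have hsphere : ∀ R : ℝ, 0 ≤ R → r ≤ R →
      Metric.sphere (0 : ℂ) R ⊆ {z : ℂ | r ≤ ‖z‖} := by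
    intro R hR0 hrR z hz
    have : ‖z‖ = R := by
      simpa [Complex.dist_eq, abs_of_nonneg hR0] using Metric.mem_sphere.mp hz
    simpa [this] using hrR
  -- split the integrand
  have hint1 : CircleIntegrable (fun t : ℂ => t ^ k * Q.eval t * f t) 0 r := by
    apply ContinuousOn.circleIntegrable hr.le
    exact (((continuous_pow k).continuousOn.mul Q.continuous.continuousOn).mul
      (hf.continuousOn.mono (hsphere r hr.le le_rfl)))
  have hint2 : CircleIntegrable (fun t : ℂ => t ^ k * P.eval t) 0 r :=
    ContinuousOn.circleIntegrable hr.le (((continuous_pow k).mul P.continuous).continuousOn)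
  have hsplit : (∮ t in C(0, r), g t)
      = (∮ t in C(0, r), t ^ k * Q.eval t * f t) - (∮ t in C(0, r), t ^ k * P.eval t) := by
    rw [← circleIntegral.integral_sub hint1 hint2]
    apply circleIntegral.integral_congr hr.le
    intro t _
    simp only [hg, Pi.sub_apply]
    ring
  -- extract the big-O bound
  obtain ⟨C, hC⟩ := hR.bound
  rw [(Filter.hasBasis_cobounded_norm (E := ℂ)).eventually_iff] at hC
  obtain ⟨M0, -, hM0⟩ := hC
  set C' : ℝ := max C 0 with hC'
  have hC'0 : 0 ≤ C' := le_max_right _ _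
  set M : ℝ := max (max r 1) M0 with hM
  have hM1 : (1 : ℝ) ≤ M := le_trans (le_max_right r 1) (le_max_left _ _)
  have hMr : r ≤ M := le_trans (le_max_left r 1) (le_max_left _ _)
  have hMpos : 0 < M := lt_of_lt_of_le one_pos hM1
  -- for every R ≥ M, the integral of g over C(0,r) has norm ≤ 2πC'/R
  have key : ∀ R : ℝ, M ≤ R → ‖∮ t in C(0, r), g t‖ ≤ 2 * Real.pi * C' / R := by
    intro R hMR
    have hR1 : (1 : ℝ) ≤ R := le_trans hM1 hMR
    have hRpos : (0 : ℝ) < R := lt_of_lt_of_le one_pos hR1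
    have hrR : r ≤ R := le_trans hMr hMR
    -- integrals over C(0,r) and C(0,R) coincide
    have heq : (∮ t in C(0, R), g t) = ∮ t in C(0, r), g t := by
      apply Complex.circleIntegral_eq_of_differentiable_on_annulus_off_countable hr hrR
        Set.countable_empty
      · apply hgc.mono
        intro z hz
        simp only [Set.mem_diff, Metric.mem_closedBall, Metric.mem_ball,
          Complex.dist_eq, sub_zero] at hz
        exact le_of_not_gt hz.2
      · intro z hz
        simp only [Set.mem_diff, Metric.mem_ball, Metric.mem_closedBall,
          Complex.dist_eq, sub_zero, Set.mem_empty_iff_false] at hz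
        exact hgd z (lt_of_not_ge hz.1.2)
    rw [← heq]
    -- bound on the sphere of radius R
    have hbound : ∀ z ∈ Metric.sphere (0 : ℂ) R, ‖g z‖ ≤ C' / R ^ 2 := by
      intro z hz
      have hzR : ‖z‖ = R := by
        simpa [Complex.dist_eq, abs_of_nonneg hRpos.le] using Metric.mem_sphere.mp hz
      have hzM0 : M0 ≤ ‖z‖ := by
        rw [hzR]
        exact le_trans (le_max_right _ _) hMR
      have h1 : ‖Q.eval z * f z - P.eval z‖ ≤ C * ‖((z : ℂ) ^ (n + 1))⁻¹‖ :=
        hM0 hzM0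
      have h2 : ‖((z : ℂ) ^ (n + 1))⁻¹‖ = (R ^ (n + 1))⁻¹ := by
        rw [norm_inv, norm_pow, hzR]
      have h3 : ‖g z‖ ≤ R ^ k * (C' * (R ^ (n + 1))⁻¹) := by
        rw [hg]
        simp only [norm_mul, norm_pow, hzR]
        apply mul_le_mul_of_nonneg_left _ (pow_nonneg hRpos.le k)
        calc ‖Q.eval z * f z - P.eval z‖ ≤ C * ‖((z : ℂ) ^ (n + 1))⁻¹‖ := h1
          _ ≤ C' * (R ^ (n + 1))⁻¹ := by
              rw [h2]
              exact mul_le_mul_of_nonneg_right (le_max_left _ _)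
                (inv_nonneg.mpr (pow_nonneg hRpos.le _))
      refine h3.trans ?_
      have h4 : R ^ k / R ^ (n + 1) ≤ R ^ k / R ^ (k + 2) :=
        div_le_div_of_nonneg_left (pow_nonneg hRpos.le k) (pow_pos hRpos _)
          (pow_le_pow_right₀ hR1 (by omega))
      have h5 : R ^ k / R ^ (k + 2) = (R ^ 2)⁻¹ := by
        rw [pow_add]
        field_simp
      have h6 : R ^ k * (C' * (R ^ (n + 1))⁻¹) = C' * (R ^ k / R ^ (n + 1)) := by ring
      rw [h6, div_eq_mul_inv C']
      exact mul_le_mul_of_nonneg_left (h4.trans (le_of_eq h5)) hC'0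
    have := circleIntegral.norm_integral_le_of_norm_le_const (c := (0 : ℂ))
      hRpos.le hbound
    refine le_trans this (le_of_eq ?_)
    field_simp
  -- conclude by letting R → ∞
  have htend : Tendsto (fun R : ℝ => 2 * Real.pi * C' / R) atTop (nhds 0) :=
    tendsto_const_nhds.div_atTop tendsto_id
  have hle : ‖∮ t in C(0, r), g t‖ ≤ 0 :=
    ge_of_tendsto htend ((eventually_ge_atTop M).mono fun R hR' => key R hR')
  have hg0 : (∮ t in C(0, r), g t) = 0 :=
    norm_le_zero_iff.mp hle
  have : (∮ t in C(0, r), t ^ k * Q.eval t * f t) - (∮ t in C(0, r), t ^ k * P.eval t) = 0 := by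
    rw [← hsplit]; exact hg0
  rw [hpoly, sub_zero] at this
  exact this
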